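/- Integral fluctuation theorem for the dephased engine: with H₁ = Σ_n ν_n^{(1)} Π_n^{(1)} and H₂ = Σ_m ν_m^{(2)} Π_m^{(2)} spectral decompositions into rank-one orthogonal projectors onto orthonormal eigenbases, ρ₁ = exp(−βH₁)/Tr[exp(−βH₁)], U, V unitary, Φ a unital quantum channel, and stochastic-cycle probabilities p_{n,m,k,l} = Tr[Π_l^{(1)} V Π_k^{(2)} Φ(Π_m^{(2)} U Π_n^{(1)} ρ₁ Π_n^{(1)} U† Π_m^{(2)}) Π_k^{(2)} V†], one has Σ_{n,m,k,l} e^{β(ν_n^{(1)} − ν_l^{(1)})} p_{n,m,k,l} = 1. -/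

import Mathlib

open Matrix


private lemma vmv_mul {d : ℕ} (a b c e : Fin d → ℂ) :
    vecMulVec a b * vecMulVec c e = (b ⬝ᵥ c) • vecMulVec a e := by
  ext i j
  simp [Matrix.mul_apply, Matrix.vecMulVec_apply, dotProduct, Finset.sum_mul, Finset.mul_sum]
  apply Finset.sum_congr rfl
  intros; ring

private lemma sum_proj {d : ℕ} (e : Fin d → (Fin d → ℂ))
    (he : ∀ n n', star (e n) ⬝ᵥ e n' = if n = n' then 1 else 0) :
    ∑ n, vecMulVec (e n) (star (e n)) = 1 := by
  set E : Matrix (Fin d) (Fin d) ℂ := Matrix.of fun i n => e n i with hE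
  have h1 : Eᴴ * E = 1 := by
    ext n n'
    simpa [Matrix.mul_apply, Matrix.conjTranspose_apply, dotProduct, hE, Matrix.one_apply]
      using he n n'
  have h2 : E * Eᴴ = 1 := mul_eq_one_comm.mp h1
  rw [← h2]
  ext i j
  simp [Matrix.mul_apply, Matrix.conjTranspose_apply, Matrix.sum_apply, Matrix.vecMulVec_apply, hE]

private lemma exp_sum_proj {d : ℕ} (e : Fin d → (Fin d → ℂ))
    (he : ∀ n n', star (e n) ⬝ᵥ e n' = if n = n' then 1 else 0)
    (c : Fin d → ℂ) :
    NormedSpace.exp (∑ n, c n • vecMulVec (e n) (star (e n)))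
      = ∑ n, Complex.exp (c n) • vecMulVec (e n) (star (e n)) := by
  set E : Matrix (Fin d) (Fin d) ℂ := Matrix.of fun i n => e n i with hE
  have h1 : Eᴴ * E = 1 := by
    ext n n'
    simpa [Matrix.mul_apply, Matrix.conjTranspose_apply, dotProduct, hE, Matrix.one_apply]
      using he n n'
  have h2 : E * Eᴴ = 1 := mul_eq_one_comm.mp h1
  have hdiag : ∀ v : Fin d → ℂ, E * Matrix.diagonal v * Eᴴ
      = ∑ n, v n • vecMulVec (e n) (star (e n)) := by
    intro v
    ext i j
    simp only [Matrix.mul_apply, Matrix.conjTranspose_apply, Matrix.diagonal_apply, hE,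
      Matrix.of_apply, Matrix.sum_apply, Matrix.smul_apply, Matrix.vecMulVec_apply,
      mul_ite, ite_mul, zero_mul, mul_zero, Finset.sum_ite_eq, Finset.sum_ite_eq',
      Finset.mem_univ, if_true, Finset.sum_mul, smul_eq_mul, Pi.star_apply, RCLike.star_def]
    apply Finset.sum_congr rfl
    intros; ring
  have hEinv : E⁻¹ = Eᴴ := Matrix.inv_eq_right_inv h2
  have hEu : IsUnit E := ⟨⟨E, Eᴴ, h2, h1⟩, rfl⟩
  rw [← hdiag c, ← hEinv, Matrix.exp_conj E _ hEu, Matrix.exp_diagonal, hEinv, hdiag]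
  congr 1
  funext n
  rw [Pi.coe_exp, ← Complex.exp_eq_exp_ℂ]

/-- Integral fluctuation theorem for the dephased engine: with
`H₁ = ∑ n, ν₁ n • P₁ n` and `H₂ = ∑ m, ν₂ m • P₂ m` spectral decompositions into rank-one
orthogonal projectors onto orthonormal eigenbases, `ρ₁ = exp (−β H₁) / Tr (exp (−β H₁))`,
`U, V` unitary, `Φ` a unital quantum channel, and stochastic-cycle probabilities
`p n m k l = Tr[P₁ l * V * P₂ k * Φ (P₂ m * U * P₁ n * ρ₁ * P₁ n * Uᴴ * P₂ m) * P₂ k * Vᴴ]`,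
one has `∑ n m k l, e^{β (ν₁ n − ν₁ l)} * p n m k l = 1`. -/
theorem dephased_integral_fluctuation_theorem
    {d : ℕ} (hd : 1 ≤ d) (β : ℝ)
    (H₁ H₂ : Matrix (Fin d) (Fin d) ℂ)
    (e f : Fin d → (Fin d → ℂ))
    (he : ∀ n n', star (e n) ⬝ᵥ e n' = if n = n' then 1 else 0)
    (hf : ∀ m m', star (f m) ⬝ᵥ f m' = if m = m' then 1 else 0)
    (ν₁ ν₂ : Fin d → ℝ)
    (P₁ P₂ : Fin d → Matrix (Fin d) (Fin d) ℂ)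
    (hP₁ : ∀ n, P₁ n = vecMulVec (e n) (star (e n)))
    (hP₂ : ∀ m, P₂ m = vecMulVec (f m) (star (f m)))
    (hspec₁ : H₁ = ∑ n, (ν₁ n : ℂ) • P₁ n)
    (hspec₂ : H₂ = ∑ m, (ν₂ m : ℂ) • P₂ m)
    (ρ₁ : Matrix (Fin d) (Fin d) ℂ)
    (hρ₁ : ρ₁ = ((NormedSpace.exp (-(β : ℂ) • H₁)).trace)⁻¹ •
        NormedSpace.exp (-(β : ℂ) • H₁))
    (U V : Matrix (Fin d) (Fin d) ℂ)
    (hU : Uᴴ * U = 1) (hU' : U * Uᴴ = 1)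
    (hV : Vᴴ * V = 1) (hV' : V * Vᴴ = 1)
    {K : ℕ} (Kr : Fin K → Matrix (Fin d) (Fin d) ℂ)
    (hKr : ∑ k, (Kr k)ᴴ * Kr k = 1) (hKr' : ∑ k, Kr k * (Kr k)ᴴ = 1)
    (Φ : Matrix (Fin d) (Fin d) ℂ → Matrix (Fin d) (Fin d) ℂ)
    (hΦ : ∀ X, Φ X = ∑ k, Kr k * X * (Kr k)ᴴ)
    (p : Fin d → Fin d → Fin d → Fin d → ℂ)
    (hp : ∀ n m k l, p n m k l =
      (P₁ l * V * P₂ k * Φ (P₂ m * U * P₁ n * ρ₁ * P₁ n * Uᴴ * P₂ m) * P₂ k * Vᴴ).trace) :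
    ∑ n, ∑ m, ∑ k, ∑ l, (Real.exp (β * (ν₁ n - ν₁ l)) : ℂ) * p n m k l = 1 := by
  classical
  -- basic projector algebra
  have hmul₁ : ∀ n n', P₁ n * P₁ n' = if n = n' then P₁ n else 0 := by
    intro n n'
    rw [hP₁ n, hP₁ n', vmv_mul, he]
    by_cases h : n = n'
    · subst h; simp
    · simp [h]
  have hmul₂ : ∀ m m', P₂ m * P₂ m' = if m = m' then P₂ m else 0 := by
    intro m m'
    rw [hP₂ m, hP₂ m', vmv_mul, hf]
    by_cases h : m = m'
    · subst h; simp
    · simp [h]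
  have hidem₂ : ∀ m, P₂ m * P₂ m = P₂ m := fun m => by simpa using hmul₂ m m
  have hsum₁ : (∑ n, P₁ n) = 1 := by
    simp_rw [hP₁]; exact sum_proj e he
  have hsum₂ : (∑ m, P₂ m) = 1 := by
    simp_rw [hP₂]; exact sum_proj f hf
  have htr₁ : ∀ n, (P₁ n).trace = 1 := by
    intro n
    have h := he n n
    rw [if_pos rfl] at h
    simp only [dotProduct, Pi.star_apply] at h
    rw [hP₁, Matrix.trace]
    simp only [Matrix.diag_apply, Matrix.vecMulVec_apply, Pi.star_apply]
    rw [← h]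
    exact Finset.sum_congr rfl fun _ _ => mul_comm _ _
  -- exponential
  set c : Fin d → ℂ := fun n => Complex.exp (-(β : ℂ) * ν₁ n) with hc
  have hexp : NormedSpace.exp (-(β : ℂ) • H₁) = ∑ n, c n • P₁ n := by
    have harg : -(β : ℂ) • H₁ = ∑ n, (-(β : ℂ) * ν₁ n) • vecMulVec (e n) (star (e n)) := by
      rw [hspec₁, Finset.smul_sum]
      simp_rw [smul_smul, hP₁]
    rw [harg, exp_sum_proj e he]
    simp_rw [hP₁]
    rfl
  set Z : ℂ := (NormedSpace.exp (-(β : ℂ) • H₁)).trace with hZdef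
  have hZ : Z = ∑ n, c n := by
    rw [hZdef, hexp, Matrix.trace_sum]
    simp [Matrix.trace_smul, htr₁]
  have hZ0 : Z ≠ 0 := by
    have hZr : Z = ((∑ n, Real.exp (-(β * ν₁ n)) : ℝ) : ℂ) := by
      rw [hZ]
      push_cast
      apply Finset.sum_congr rfl
      intro n _
      show Complex.exp _ = _
      congr 1
      ring
    rw [hZr]
    rw [Complex.ofReal_ne_zero]
    have hpos : (0:ℝ) < ∑ n, Real.exp (-(β * ν₁ n)) :=
      Finset.sum_pos (fun _ _ => Real.exp_pos _) ⟨(⟨0, hd⟩ : Fin d), Finset.mem_univ _⟩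
    exact ne_of_gt hpos
  -- sandwiched Gibbs state
  have hρP : ∀ n, P₁ n * ρ₁ * P₁ n = (Z⁻¹ * c n) • P₁ n := by
    intro n
    rw [hρ₁, hexp]
    simp [Finset.smul_sum, Matrix.mul_sum, Matrix.sum_mul, mul_smul_comm, smul_mul_assoc,
      hmul₁, smul_smul, Finset.sum_ite_eq, Finset.sum_ite_eq', apply_ite, ite_mul, mul_ite,
      smul_ite]
  -- per-term rewriting
  have hterm : ∀ n m k l, (Real.exp (β * (ν₁ n - ν₁ l)) : ℂ) * p n m k l
      = (Z⁻¹ * c l) *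
        (P₁ l * V * P₂ k * (∑ j, Kr j * (P₂ m * U * P₁ n * Uᴴ * P₂ m) * (Kr j)ᴴ)
          * P₂ k * Vᴴ).trace := by
    intro n m k l
    have h1 : P₂ m * U * P₁ n * ρ₁ * P₁ n * Uᴴ * P₂ m
        = (Z⁻¹ * c n) • (P₂ m * U * P₁ n * Uᴴ * P₂ m) := by
      conv_lhs => rw [show P₂ m * U * P₁ n * ρ₁ * P₁ n * Uᴴ * P₂ m
        = P₂ m * U * (P₁ n * ρ₁ * P₁ n) * Uᴴ * P₂ m from by simp only [mul_assoc]]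
      rw [hρP n]
      simp only [mul_smul_comm, smul_mul_assoc, mul_assoc]
    rw [hp, hΦ, h1]
    simp only [mul_smul_comm, smul_mul_assoc, ← Finset.smul_sum, Matrix.trace_smul,
      smul_eq_mul]
    have hcoef : (Real.exp (β * (ν₁ n - ν₁ l)) : ℂ) * c n = c l := by
      rw [hc, Complex.ofReal_exp, ← Complex.exp_add]
      congr 1
      push_cast
      ring
    set T := (P₁ l * V * P₂ k * (∑ j, Kr j * (P₂ m * U * P₁ n * Uᴴ * P₂ m) * (Kr j)ᴴ)
      * P₂ k * Vᴴ).trace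
    linear_combination (Z⁻¹ * T) * hcoef
  simp_rw [hterm]
  -- reorder sums: bring l and k to the outside
  have swapA : ∀ (F : Fin d → Fin d → Fin d → Fin d → ℂ),
      (∑ n, ∑ m, ∑ k, ∑ l, F n m k l) = ∑ l, ∑ k, ∑ n, ∑ m, F n m k l := by
    intro F
    have A : ∀ (n m : Fin d), (∑ k, ∑ l, F n m k l) = ∑ l, ∑ k, F n m k l :=
      fun _ _ => Finset.sum_comm
    simp_rw [A]
    have B : ∀ (n : Fin d), (∑ m, ∑ l, ∑ k, F n m k l) = ∑ l, ∑ m, ∑ k, F n m k l :=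
      fun _ => Finset.sum_comm
    simp_rw [B]
    rw [Finset.sum_comm]
    apply Finset.sum_congr rfl
    intro l _
    have C : ∀ (n : Fin d), (∑ m, ∑ k, F n m k l) = ∑ k, ∑ m, F n m k l :=
      fun _ => Finset.sum_comm
    simp_rw [C]
    exact Finset.sum_comm
  rw [swapA]
  -- collapse the Kraus/projector sums
  have hBsum : ∀ m, (∑ n, P₂ m * U * P₁ n * Uᴴ * P₂ m) = P₂ m := by
    intro m
    rw [show (∑ n, P₂ m * U * P₁ n * Uᴴ * P₂ m) = P₂ m * U * (∑ n, P₁ n) * Uᴴ * P₂ m from by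
      simp only [Finset.mul_sum, Finset.sum_mul]]
    rw [hsum₁, mul_one, mul_assoc (P₂ m) U Uᴴ, hU', mul_one, hidem₂]
  have hMsum : (∑ n, ∑ m, ∑ j, Kr j * (P₂ m * U * P₁ n * Uᴴ * P₂ m) * (Kr j)ᴴ) = 1 := by
    rw [Finset.sum_comm]
    have A : ∀ m, (∑ n, ∑ j, Kr j * (P₂ m * U * P₁ n * Uᴴ * P₂ m) * (Kr j)ᴴ)
        = ∑ j, Kr j * P₂ m * (Kr j)ᴴ := by
      intro m
      rw [Finset.sum_comm]
      apply Finset.sum_congr rfl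
      intro j _
      rw [show (∑ n, Kr j * (P₂ m * U * P₁ n * Uᴴ * P₂ m) * (Kr j)ᴴ)
          = Kr j * (∑ n, P₂ m * U * P₁ n * Uᴴ * P₂ m) * (Kr j)ᴴ from by
        simp only [Finset.mul_sum, Finset.sum_mul]]
      rw [hBsum]
    simp_rw [A]
    rw [Finset.sum_comm]
    have B : ∀ j, (∑ m, Kr j * P₂ m * (Kr j)ᴴ) = Kr j * (Kr j)ᴴ := by
      intro j
      rw [show (∑ m, Kr j * P₂ m * (Kr j)ᴴ) = Kr j * (∑ m, P₂ m) * (Kr j)ᴴ from by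
        simp only [Finset.mul_sum, Finset.sum_mul]]
      rw [hsum₂, mul_one]
    simp_rw [B, hKr']
  have hkl : ∀ l, (∑ k, ∑ n, ∑ m,
      (P₁ l * V * P₂ k * (∑ j, Kr j * (P₂ m * U * P₁ n * Uᴴ * P₂ m) * (Kr j)ᴴ)
        * P₂ k * Vᴴ).trace) = 1 := by
    intro l
    have hk : ∀ k, (∑ n, ∑ m,
        (P₁ l * V * P₂ k * (∑ j, Kr j * (P₂ m * U * P₁ n * Uᴴ * P₂ m) * (Kr j)ᴴ)
          * P₂ k * Vᴴ).trace) = (P₁ l * V * P₂ k * Vᴴ).trace := by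
      intro k
      rw [show (∑ n, ∑ m,
          (P₁ l * V * P₂ k * (∑ j, Kr j * (P₂ m * U * P₁ n * Uᴴ * P₂ m) * (Kr j)ᴴ)
            * P₂ k * Vᴴ).trace)
          = (P₁ l * V * P₂ k *
              (∑ n, ∑ m, ∑ j, Kr j * (P₂ m * U * P₁ n * Uᴴ * P₂ m) * (Kr j)ᴴ)
            * P₂ k * Vᴴ).trace from by
        simp only [Finset.mul_sum, Finset.sum_mul, Matrix.trace_sum]]
      rw [hMsum, mul_one, mul_assoc (P₁ l * V) (P₂ k) (P₂ k), hidem₂]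
    simp_rw [hk]
    rw [show (∑ k, (P₁ l * V * P₂ k * Vᴴ).trace)
        = (P₁ l * V * (∑ k, P₂ k) * Vᴴ).trace from by
      simp only [Finset.mul_sum, Finset.sum_mul, Matrix.trace_sum]]
    rw [hsum₂, mul_one, mul_assoc (P₁ l) V Vᴴ, hV', mul_one, htr₁]
  calc (∑ l, ∑ k, ∑ n, ∑ m, (Z⁻¹ * c l) *
        (P₁ l * V * P₂ k * (∑ j, Kr j * (P₂ m * U * P₁ n * Uᴴ * P₂ m) * (Kr j)ᴴ)
          * P₂ k * Vᴴ).trace)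
      = ∑ l, (Z⁻¹ * c l) * (∑ k, ∑ n, ∑ m,
        (P₁ l * V * P₂ k * (∑ j, Kr j * (P₂ m * U * P₁ n * Uᴴ * P₂ m) * (Kr j)ᴴ)
          * P₂ k * Vᴴ).trace) := by
        apply Finset.sum_congr rfl
        intro l _
        simp only [Finset.mul_sum]
    _ = ∑ l, (Z⁻¹ * c l) * 1 := by
        apply Finset.sum_congr rfl
        intro l _
        rw [hkl]
    _ = Z⁻¹ * ∑ l, c l := by
        simp [Finset.mul_sum, mul_assoc]
    _ = 1 := by rw [← hZ, inv_mul_cancel₀ hZ0]
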